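/- Let X be a compact metric space, G a closed relation on X, and suppose there exists a finite subset F = {c_1,…,c_n} ⊆ G such that the infinite Mahavier product ⋆_{n=1}^{∞} F^{-1} is infinite (for example, a Cantor set). Then G generates at least two periodic points, i.e., there exist at least two distinct points x ∈ ⋆_{n=1}^{∞} G^{-1} with σ^n(x) = x for some positive integer n, where σ is the shift map. -/

import Mathlib

/-- The infinite Mahavier product `⋆_{i=1}^∞ G⁻¹`. -/
def mahInf {X : Type*} (G : Set (X × X)) : Set (ℕ → X) :=
  {x | ∀ i : ℕ, (x (i + 1), x i) ∈ G}

/-- The shift map. -/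
def shift {X : Type*} (x : ℕ → X) : ℕ → X := fun i => x (i + 1)

lemma shift_iter {X : Type*} (x : ℕ → X) (n : ℕ) :
    shift^[n] x = fun i => x (i + n) := by
  induction n with
  | zero => simp
  | succ n ih =>
    rw [Function.iterate_succ_apply', ih]
    funext i
    show x (i + 1 + n) = x (i + (n + 1))
    congr 1
    omega

lemma mod_succ_aux (k p : ℕ) (hp : 0 < p) : (k + 1) % p = (k % p + 1) % p := by
  conv_lhs => rw [Nat.add_mod]
  conv_rhs => rw [Nat.add_mod, Nat.mod_mod_of_dvd _ dvd_rfl]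

lemma per_of_repeat {X : Type*} {F : Set (X × X)} {x : ℕ → X} (hx : x ∈ mahInf F)
    {i j : ℕ} (hij : i < j) (he : x i = x j) :
    (fun k => x (i + k % (j - i))) ∈ mahInf F ∧
    shift^[j - i] (fun k => x (i + k % (j - i))) = (fun k => x (i + k % (j - i))) := by
  set p := j - i with hpdef
  have hp : 0 < p := by omega
  constructor
  · intro k
    have hr : k % p < p := Nat.mod_lt _ hp
    rcases Nat.lt_or_ge (k % p + 1) p with hlt | hge
    · have h1 : (k + 1) % p = k % p + 1 := by
        rw [mod_succ_aux k p hp, Nat.mod_eq_of_lt hlt]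
      show (x (i + (k + 1) % p), x (i + k % p)) ∈ F
      rw [h1]
      have : i + (k % p + 1) = (i + k % p) + 1 := by omega
      rw [this]
      exact hx (i + k % p)
    · have heq : k % p + 1 = p := by omega
      have h1 : (k + 1) % p = 0 := by
        rw [mod_succ_aux k p hp, heq, Nat.mod_self]
      show (x (i + (k + 1) % p), x (i + k % p)) ∈ F
      rw [h1]
      have h2 : i + k % p = j - 1 := by omega
      have h3 : (j - 1) + 1 = j := by omega
      have h4 := hx (j - 1)
      rw [h3] at h4
      rw [h2, Nat.add_zero, he]
      exact h4
  · rw [shift_iter]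
    funext k
    show x (i + (k + p) % p) = x (i + k % p)
    rw [Nat.add_mod_right]

lemma exists_repeat {X : Type*} {V : Set X} (hV : V.Finite) {x : ℕ → X}
    (hx : ∀ i, x i ∈ V) (k : ℕ) :
    ∃ i j, k ≤ i ∧ i < j ∧ j ≤ k + hV.toFinset.card ∧ x i = x j := by
  obtain ⟨a, ha, b, hb, hab, he⟩ :=
    Finset.exists_ne_map_eq_of_card_lt_of_maps_to
      (s := Finset.Icc k (k + hV.toFinset.card)) (t := hV.toFinset) (f := x)
      (by rw [Nat.card_Icc]; omega)
      (fun a _ => by simpa [Set.Finite.mem_toFinset] using hx a)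
  rw [Finset.mem_Icc] at ha hb
  rcases lt_or_gt_of_ne hab with h | h
  · exact ⟨a, b, ha.1, h, hb.2, he⟩
  · exact ⟨b, a, hb.1, h, ha.2, he.symm⟩

theorem stmt_7 {X : Type*} [MetricSpace X] [CompactSpace X]
    (G : Set (X × X)) (hGc : IsClosed G)
    (h : ∃ F : Set (X × X), F ⊆ G ∧ F.Finite ∧ (mahInf F).Infinite) :
    ∃ x ∈ mahInf G, ∃ y ∈ mahInf G, x ≠ y ∧
      (∃ n : ℕ, 0 < n ∧ shift^[n] x = x) ∧ (∃ n : ℕ, 0 < n ∧ shift^[n] y = y) := by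
  obtain ⟨F, hFG, hFfin, hFinf⟩ := h
  have hsub : mahInf F ⊆ mahInf G := fun x hx i => hFG (hx i)
  by_contra hcon
  -- uniqueness of periodic points
  have huniq : ∀ x ∈ mahInf F, ∀ y ∈ mahInf F,
      (∃ n, 0 < n ∧ shift^[n] x = x) → (∃ n, 0 < n ∧ shift^[n] y = y) → x = y := by
    intro x hx y hy px py
    by_contra hne
    exact hcon ⟨x, hsub hx, y, hsub hy, hne, px, py⟩
  set V : Set X := Prod.snd '' F with hVdef
  have hVfin : V.Finite := hFfin.image _
  have hmemV : ∀ x ∈ mahInf F, ∀ i, x i ∈ V := fun x hx i => ⟨(x (i + 1), x i), hx i, rfl⟩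
  set N := hVfin.toFinset.card with hNdef
  obtain ⟨x0, hx0⟩ := hFinf.nonempty
  obtain ⟨a0, b0, _, hab0, _, he0⟩ := exists_repeat hVfin (hmemV x0 hx0) 0
  obtain ⟨hz, hzper⟩ := per_of_repeat hx0 hab0 he0
  set z : ℕ → X := fun k => x0 (a0 + k % (b0 - a0)) with hzdef
  set p := b0 - a0 with hpdef
  have hp : 0 < p := by omega
  -- shift z is also a periodic point
  have hsz_mem : shift z ∈ mahInf F := fun i => hz (i + 1)
  have hsz_per : shift^[p] (shift z) = shift z := by
    have h1 : shift^[p] (shift z) = shift (shift^[p] z) := by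
      rw [← Function.iterate_succ_apply, Function.iterate_succ_apply']
    rw [h1, hzper]
  have hsz : shift z = z := huniq _ hsz_mem _ hz ⟨p, hp, hsz_per⟩ ⟨p, hp, hzper⟩
  set v := z 0 with hvdef
  have hconst : ∀ k, z k = v := by
    intro k
    induction k with
    | zero => rfl
    | succ k ih => rw [← ih]; exact congrFun hsz k
  -- any repeated value forces segment = v
  have hA : ∀ x ∈ mahInf F, ∀ a b, a < b → x a = x b → ∀ k, a ≤ k → k < b → x k = v := by
    intro x hx a b hab he k hak hkb
    obtain ⟨hy, hyper⟩ := per_of_repeat hx hab he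
    have heqz : (fun k => x (a + k % (b - a))) = z :=
      huniq _ hy _ hz ⟨b - a, by omega, hyper⟩ ⟨p, hp, hzper⟩
    have h2 := congrFun heqz (k - a)
    rw [Nat.mod_eq_of_lt (by omega : k - a < b - a)] at h2
    have h3 : a + (k - a) = k := by omega
    rw [h3] at h2
    rw [h2, hconst]
  -- all sequences are eventually v
  have hB : ∀ x ∈ mahInf F, ∀ k, N ≤ k → x k = v := by
    intro x hx k hk
    obtain ⟨a, b, _, hab, hbN, he⟩ := exists_repeat hVfin (hmemV x hx) 0
    have hav : x a = v := hA x hx a b hab he a le_rfl hab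
    obtain ⟨a', b', ha', hab', _, he'⟩ := exists_repeat hVfin (hmemV x hx) (k + 1)
    have ha'v : x a' = v := hA x hx a' b' hab' he' a' le_rfl hab'
    exact hA x hx a a' (by omega) (hav.trans ha'v.symm) k (by omega) (by omega)
  -- mahInf F is finite: contradiction
  have hfin : (mahInf F).Finite := by
    have hinj : Set.InjOn (fun x : ℕ → X => (fun m : Fin (N + 1) => x m)) (mahInf F) := by
      intro x hx y hy hxy
      funext k
      rcases Nat.lt_or_ge k (N + 1) with hlt | hge
      · exact congrFun hxy ⟨k, hlt⟩
      · rw [hB x hx k (by omega), hB y hy k (by omega)]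
    apply Set.Finite.of_finite_image _ hinj
    apply Set.Finite.subset (Set.Finite.pi (fun _ : Fin (N + 1) => hVfin))
    rintro _ ⟨x, hx, rfl⟩
    exact fun m _ => hmemV x hx m
  exact hFinf hfin
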